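/- Let G be a finite simple graph on vertex set V. Construct the simple graph H with vertex set (V × {0,1} × V) ∪ {s*, t*}, where s* and t* are two new vertices, with the following edges: for each w ∈ V, (u,i,w) is adjacent to (v,j,w) if and only if u is adjacent to v in G and i ≠ j (so the subgraph induced on V × {0,1} × {w} is a copy of the bipartite double cover DC(G)); moreover, for each w ∈ V, s* is adjacent to (w,0,w) and t* is adjacent to (w,1,w). Then s* and t* are connected in H if and only if G is not 2-colorable. -/

import Mathlib

section Aux

variable {V : Type} (G : SimpleGraph V)

private def auxRel (G : SimpleGraph V) : (V × Bool × V) ⊕ Bool → (V × Bool × V) ⊕ Bool → Prop :=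
  fun x y =>
    (∃ (u v : V) (i j : Bool) (w : V), G.Adj u v ∧ i ≠ j ∧
        x = Sum.inl (u, i, w) ∧ y = Sum.inl (v, j, w)) ∨
    (∃ w : V, x = Sum.inr false ∧ y = Sum.inl (w, false, w)) ∨
    (∃ w : V, x = Sum.inr true ∧ y = Sum.inl (w, true, w))

private def auxH (G : SimpleGraph V) : SimpleGraph ((V × Bool × V) ⊕ Bool) :=
  SimpleGraph.fromRel (auxRel G)

private lemma fin2cases (x : Fin 2) : x = 0 ∨ x = 1 := by fin_cases x <;> simp

private lemma walk_const {α : Type} (H : SimpleGraph α) (f : α → Bool)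
    (hf : ∀ x y, H.Adj x y → f x = f y) {x y : α} (h : H.Reachable x y) : f x = f y := by
  obtain ⟨p⟩ := h
  induction p with
  | nil => rfl
  | cons h q ih => exact (hf _ _ h).trans ih

private lemma auxH_adj_inl {u v : V} (h : G.Adj u v) (i : Bool) (w : V) :
    (auxH G).Adj (Sum.inl (u, i, w)) (Sum.inl (v, !i, w)) := by
  rw [auxH, SimpleGraph.fromRel_adj]
  constructor
  · simp only [ne_eq, Sum.inl.injEq, Prod.mk.injEq, not_and]
    intro _ hi; exact absurd hi (by simp)
  · exact Or.inl (Or.inl ⟨u, v, i, !i, w, h, by simp, rfl, rfl⟩)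

private lemma auxH_adj_s (w : V) :
    (auxH G).Adj (Sum.inr false) (Sum.inl (w, false, w)) := by
  rw [auxH, SimpleGraph.fromRel_adj]
  exact ⟨by simp, Or.inl (Or.inr (Or.inl ⟨w, rfl, rfl⟩))⟩

private lemma auxH_adj_t (w : V) :
    (auxH G).Adj (Sum.inr true) (Sum.inl (w, true, w)) := by
  rw [auxH, SimpleGraph.fromRel_adj]
  exact ⟨by simp, Or.inl (Or.inr (Or.inr ⟨w, rfl, rfl⟩))⟩

/-- Lifting a walk of `G` into the `w`-copy of the double cover inside `auxH`. -/
private lemma auxH_lift {u v : V} (p : G.Walk u v) (i : Bool) (w : V) :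
    (auxH G).Reachable (Sum.inl (u, i, w))
      (Sum.inl (v, xor i (decide (Odd p.length)), w)) := by
  induction p generalizing i with
  | nil =>
    have h0 : decide (Odd (0 : ℕ)) = false := by decide
    simp only [SimpleGraph.Walk.length_nil, h0, Bool.xor_false]
    convert SimpleGraph.Reachable.refl _ <;> simp
  | @cons a b c h q ih =>
    have h1 : (auxH G).Reachable (Sum.inl (a, i, w)) (Sum.inl (b, !i, w)) :=
      (auxH_adj_inl G h i w).reachable
    have h2 := ih (!i)
    refine h1.trans (h2.trans ?_)
    have : xor (!i) (decide (Odd q.length)) =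
        xor i (decide (Odd (SimpleGraph.Walk.cons h q).length)) := by
      have hlen : (SimpleGraph.Walk.cons h q).length = q.length + 1 :=
        SimpleGraph.Walk.length_cons h q
      rw [hlen]
      by_cases hq : Odd q.length
      · have hq1 : ¬ Odd (q.length + 1) := by
          rw [Nat.odd_iff] at hq ⊢; omega
        cases i <;> simp [hq, hq1]
      · have hq1 : Odd (q.length + 1) := by
          rw [Nat.odd_iff] at hq ⊢; omega
        cases i <;> simp [hq, hq1]
    rw [this]

/-- If `G` has no odd closed walk, it is 2-colorable. -/
private lemma colorable_of_no_odd_closed (h : ∀ (w : V) (p : G.Walk w w), Even p.length) :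
    G.Colorable 2 := by
  classical
  -- representative of the component of u
  let rep : V → V := fun u => (G.connectedComponentMk u).out
  have hrep : ∀ u, G.Reachable (rep u) u := by
    intro u
    exact (SimpleGraph.ConnectedComponent.eq.mp ((G.connectedComponentMk u).out_eq))
  let wk : ∀ u, G.Walk (rep u) u := fun u => (hrep u).some
  let c : V → Bool := fun u => decide (Odd (wk u).length)
  have key : ∀ u v, G.Adj u v → c u ≠ c v := by
    intro u v hadj
    have hcomp : rep u = rep v := by
      have : G.connectedComponentMk u = G.connectedComponentMk v :=
        SimpleGraph.ConnectedComponent.sound hadj.reachable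
      simp only [rep, this]
    -- closed walk at rep u
    let q' : G.Walk (rep u) v := (wk v).copy hcomp.symm rfl
    have hq' : q'.length = (wk v).length := SimpleGraph.Walk.length_copy _ _ _
    have hclosed := h (rep u) ((wk u).append (SimpleGraph.Walk.cons hadj q'.reverse))
    have hlen : ((wk u).append (SimpleGraph.Walk.cons hadj q'.reverse)).length =
        (wk u).length + (q'.length + 1) := by
      simp [SimpleGraph.Walk.length_append, SimpleGraph.Walk.length_cons,
        SimpleGraph.Walk.length_reverse]
    rw [hlen] at hclosed
    have : Odd (wk u).length ↔ ¬ Odd (wk v).length := by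
      rw [← hq']
      rcases hclosed with ⟨k, hk⟩
      rw [Nat.odd_iff, Nat.odd_iff]
      omega
    simp only [c, ne_eq, decide_eq_decide]
    tauto
  exact ⟨SimpleGraph.Coloring.mk (fun u => if c u then 0 else 1) (by
    intro u v hadj
    have := key u v hadj
    by_cases h1 : c u <;> by_cases h2 : c v <;> simp_all)⟩

end Aux

/-- Let `G` be a finite simple graph on `V`. The graph `H` on
`(V × Bool × V) ⊕ Bool` (where `Sum.inr false` is `s*` and `Sum.inr true` is `t*`), whose
edges are: `(u,i,w) ~ (v,j,w)` iff `G.Adj u v ∧ i ≠ j` (a copy of the bipartite double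
cover of `G` for each `w`), together with `s* ~ (w,0,w)` and `t* ~ (w,1,w)` for each `w`.
Then `s*` and `t*` are connected in `H` iff `G` is not 2-colorable. -/
theorem stmt_2 {V : Type} [Fintype V] (G : SimpleGraph V) :
    (SimpleGraph.fromRel (fun x y : (V × Bool × V) ⊕ Bool =>
      (∃ (u v : V) (i j : Bool) (w : V), G.Adj u v ∧ i ≠ j ∧
          x = Sum.inl (u, i, w) ∧ y = Sum.inl (v, j, w)) ∨
      (∃ w : V, x = Sum.inr false ∧ y = Sum.inl (w, false, w)) ∨
      (∃ w : V, x = Sum.inr true ∧ y = Sum.inl (w, true, w)))).Reachable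
      (Sum.inr false) (Sum.inr true) ↔
      ¬ G.Colorable 2 := by
  show (auxH G).Reachable (Sum.inr false) (Sum.inr true) ↔ ¬ G.Colorable 2
  constructor
  · -- reachable → not 2-colorable
    intro hreach hcol
    obtain ⟨C⟩ := hcol
    -- invariant
    set f : (V × Bool × V) ⊕ Bool → Bool := fun x =>
      match x with
      | Sum.inr b => !b
      | Sum.inl (u, i, w) => ((decide (C u = 0) == i) == (decide (C w = 0) == false)) with hf
    have hC : ∀ {u v : V}, G.Adj u v → decide (C u = 0) = !decide (C v = 0) := by
      intro u v hadj
      have hne := C.valid hadj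
      rcases fin2cases (C u) with h1 | h1 <;> rcases fin2cases (C v) with h2 | h2 <;>
        simp_all
    have hedge : ∀ x y, (auxH G).Adj x y → f x = f y := by
      have main : ∀ x y, auxRel G x y → f x = f y := by
        intro x y hr
        rcases hr with ⟨u, v, i, j, w, hadj, hne, rfl, rfl⟩ | ⟨w, rfl, rfl⟩ | ⟨w, rfl, rfl⟩
        · have ha := hC hadj
          have hj : j = !i := by
            cases i <;> cases j <;> simp_all
          subst hj
          simp only [hf]
          rw [ha]
          cases (decide (C v = 0)) <;> cases i <;> simp
        · simp only [hf]
          cases (decide (C w = 0)) <;> simp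
        · simp only [hf]
          cases (decide (C w = 0)) <;> simp
      intro x y hxy
      rw [auxH, SimpleGraph.fromRel_adj] at hxy
      rcases hxy.2 with h | h
      · exact main x y h
      · exact (main y x h).symm
    have := walk_const (auxH G) f hedge hreach
    simp [hf] at this
  · -- not 2-colorable → reachable
    intro hncol
    by_contra hnreach
    apply hncol
    apply colorable_of_no_odd_closed
    intro w p
    by_contra hodd
    rw [Nat.not_even_iff_odd] at hodd
    have hlift := auxH_lift G p false w
    rw [show xor false (decide (Odd p.length)) = true by simp [hodd]] at hlift
    exact hnreach (((auxH_adj_s G w).reachable.trans hlift).trans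
      (auxH_adj_t G w).reachable.symm)
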